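/- Let R be an integral domain. Then R is a D-ring if and only if every polynomial f(x) ∈ R[x] such that f(k) is a unit of R for all but finitely many k ∈ R is a constant polynomial. -/

import Mathlib

open Polynomial

/-- An integral domain `R` is a *D-ring* if for all polynomials `f, g ∈ R[x]` such that
`g(k) ∣ f(k)` in `R` for all but finitely many `k ∈ R`, there is a polynomial `q` over the
field of fractions of `R` with `f = q * g` in `K[x]`. -/
def IsDRing (R : Type*) [CommRing R] [IsDomain R] : Prop :=
  ∀ f g : Polynomial R,
    (∀ᶠ k in Filter.cofinite, g.eval k ∣ f.eval k) →
    ∃ q : Polynomial (FractionRing R),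
      f.map (algebraMap R (FractionRing R)) = q * g.map (algebraMap R (FractionRing R))

set_option linter.unusedSectionVars false

section DRingAux

variable {R : Type*} [CommRing R] [IsDomain R]

private lemma dr_mapinj :
    Function.Injective (Polynomial.map (algebraMap R (FractionRing R))) :=
  Polynomial.map_injective _ (IsFractionRing.injective R (FractionRing R))

private lemma dr_exists_denom (p : Polynomial (FractionRing R)) :
    ∃ (b : R) (P : Polynomial R), b ≠ 0 ∧
      P.map (algebraMap R (FractionRing R)) = C (algebraMap R (FractionRing R) b) * p := by
  obtain ⟨b, hb⟩ := IsLocalization.integerNormalization_map_to_map (nonZeroDivisors R) p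
  refine ⟨(b : R), IsLocalization.integerNormalization (nonZeroDivisors R) p,
    nonZeroDivisors.coe_ne_zero b, ?_⟩
  rw [hb, ← smul_eq_C_mul]
  exact (algebraMap_smul (FractionRing R) (b : R) p).symm

private lemma dr_eventually_ne_zero [Infinite R] {g : Polynomial R} (hg : g ≠ 0) :
    ∀ᶠ k in Filter.cofinite, g.eval k ≠ 0 := by
  rw [Filter.eventually_cofinite]
  simpa [Polynomial.IsRoot] using Polynomial.finite_setOf_isRoot hg

private lemma dr_key [Infinite R]
    (H : ∀ f : Polynomial R, (∀ᶠ k in Filter.cofinite, IsUnit (f.eval k)) → f.degree ≤ 0) :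
    ∀ (n : ℕ) (g s : Polynomial R), g.natDegree ≤ n → s ≠ 0 → s.degree < g.degree →
      (∀ᶠ k in Filter.cofinite, g.eval k ∣ s.eval k) → False := by
  intro n
  induction n with
  | zero =>
    intro g s hn hs hd _
    have h1 : (0 : WithBot ℕ) ≤ s.degree := zero_le_degree_iff.mpr hs
    have h2 : g.degree ≤ 0 := by
      refine le_trans (degree_le_natDegree) ?_
      exact_mod_cast Nat.cast_le.mpr hn
    exact absurd (lt_of_le_of_lt h1 hd) (not_lt.mpr h2)
  | succ n ih =>
    intro g s hn hs hd hyp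
    classical
    have hg0 : g ≠ 0 := by
      rintro rfl
      rw [degree_zero] at hd
      exact not_lt_bot hd
    have hds : (0 : WithBot ℕ) ≤ s.degree := zero_le_degree_iff.mpr hs
    have hng : 1 ≤ g.natDegree := natDegree_pos_iff_degree_pos.mpr (lt_of_le_of_lt hds hd)
    set K := FractionRing R
    set φ := algebraMap R K with hφ
    have hinjφ : Function.Injective φ := IsFractionRing.injective R K
    set g' := g.map φ with hg'def
    set s' := s.map φ with hs'def
    have hg' : g' ≠ 0 := (Polynomial.map_ne_zero_iff hinjφ).mpr hg0
    have hs' : s' ≠ 0 := (Polynomial.map_ne_zero_iff hinjφ).mpr hs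
    set h : Polynomial K := EuclideanDomain.gcd g' s' with hhdef
    by_cases hu : IsUnit h
    · -- coprime case
      obtain ⟨u, v, huv⟩ := EuclideanDomain.gcd_isUnit_iff.mp hu
      obtain ⟨b, U, hb, hU⟩ := dr_exists_denom u
      obtain ⟨c, V, hc, hV⟩ := dr_exists_denom v
      have key : (C (b * c) : Polynomial R) = C c * U * g + C b * V * s := by
        apply dr_mapinj
        rw [Polynomial.map_add, Polynomial.map_mul, Polynomial.map_mul, Polynomial.map_mul,
          Polynomial.map_mul, map_C, map_C, map_C, hU, hV, map_mul, C_mul]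
        linear_combination (-(C (φ b) * C (φ c))) * huv
      have hdvd : ∀ᶠ k in Filter.cofinite, g.eval k ∣ b * c := by
        filter_upwards [hyp] with k hk
        obtain ⟨t, ht⟩ := hk
        have e := congrArg (Polynomial.eval k) key
        simp only [eval_C, eval_add, eval_mul] at e
        exact ⟨c * U.eval k + b * V.eval k * t, by linear_combination e + (b * V.eval k) * ht⟩
      obtain ⟨a, ha1, ha2⟩ := (hdvd.and (dr_eventually_ne_zero hg0)).exists
      have hdne : b * c ≠ 0 := mul_ne_zero hb hc
      obtain ⟨e, he⟩ := ha1
      have hsub : (C (b * c) * X : Polynomial R) ∣ g.comp (C a + C (b * c) * X) - C (g.eval a) := by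
        have h1 := sub_dvd_eval_sub (C a + C (b * c) * X) (C a)
          (g.map (Polynomial.C : R →+* Polynomial R))
        simp only [eval_map] at h1
        have h2 : C a + C (b * c) * X - C a = C (b * c) * X := by ring
        rw [h2] at h1
        have h3 : g.eval₂ Polynomial.C (C a + C (b * c) * X) = g.comp (C a + C (b * c) * X) := rfl
        have h4 : g.eval₂ Polynomial.C (C a) = g.comp (C a) := rfl
        rw [h3, h4, comp_C] at h1
        exact h1
      obtain ⟨w, hw⟩ := hsub
      have hw' : g.comp (C a + C (b * c) * X) - C (g.eval a) = C (b * c) * X * w := hw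
      have hCe : (C (b * c) : Polynomial R) = C (g.eval a) * C e := by rw [he, C_mul]
      set h₀ : Polynomial R := 1 + C e * X * w with hh₀
      have hcomp : g.comp (C a + C (b * c) * X) = C (g.eval a) * h₀ := by
        rw [hh₀]
        linear_combination hw' + hCe * (X * w)
      have hunit : ∀ᶠ y in Filter.cofinite, IsUnit (h₀.eval y) := by
        have hinj : Function.Injective (fun y : R => a + (b * c) * y) := by
          intro x y hxy
          simp only at hxy
          exact mul_left_cancel₀ hdne (add_left_cancel hxy)
        have hev : ∀ᶠ y in Filter.cofinite, g.eval (a + (b * c) * y) ∣ b * c :=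
          hinj.tendsto_cofinite.eventually hdvd
        filter_upwards [hev] with y hy
        have h1 : g.eval (a + (b * c) * y) = g.eval a * h₀.eval y := by
          have := congrArg (Polynomial.eval y) hcomp
          simpa [eval_comp] using this
        rw [h1, he] at hy
        obtain ⟨t, ht⟩ := (mul_dvd_mul_iff_left ha2).mp hy
        have h3 : h₀.eval y = 1 + e * (y * w.eval y) := by
          rw [hh₀]; simp; ring
        refine IsUnit.of_mul_eq_one (1 - t * (y * w.eval y)) ?_
        linear_combination h3 + (y * w.eval y) * ht
      have hcon := H h₀ hunit
      have hnd : h₀.natDegree = g.natDegree := by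
        have h4 : (C (g.eval a) * h₀).natDegree = g.natDegree := by
          rw [← hcomp, natDegree_comp]
          have h5 : (C a + C (b * c) * X).natDegree = 1 := by
            rw [add_comm]; exact natDegree_linear hdne
          rw [h5, mul_one]
        rwa [natDegree_C_mul ha2] at h4
      have : h₀.natDegree = 0 := Nat.le_zero.mp (natDegree_le_iff_degree_le.mpr hcon)
      omega
    · -- non-coprime case
      have hh : h ≠ 0 := fun h0 => hg' ((EuclideanDomain.gcd_eq_zero_iff.mp h0).1)
      have hhd : 0 < h.natDegree := by
        by_contra hcon
        have h0 : h.natDegree = 0 := by omega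
        exact hu (isUnit_iff_degree_eq_zero.mpr (by rw [degree_eq_natDegree hh, h0]; rfl))
      obtain ⟨g₁, hg₁⟩ := EuclideanDomain.gcd_dvd_left g' s'
      obtain ⟨s₁, hs₁⟩ := EuclideanDomain.gcd_dvd_right g' s'
      rw [← hhdef] at hg₁ hs₁
      have hg₁0 : g₁ ≠ 0 := by rintro rfl; rw [mul_zero] at hg₁; exact hg' hg₁
      have hs₁0 : s₁ ≠ 0 := by rintro rfl; rw [mul_zero] at hs₁; exact hs' hs₁
      obtain ⟨α, H₁, hα, hH₁⟩ := dr_exists_denom h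
      obtain ⟨β, G₁, hβ, hG₁⟩ := dr_exists_denom g₁
      obtain ⟨γ, S₁, hγ, hS₁⟩ := dr_exists_denom s₁
      have hφα : φ α ≠ 0 := fun h0 => hα (hinjφ (by simpa using h0))
      have hφβ : φ β ≠ 0 := fun h0 => hβ (hinjφ (by simpa using h0))
      have hφγ : φ γ ≠ 0 := fun h0 => hγ (hinjφ (by simpa using h0))
      have hH₁0 : H₁ ≠ 0 := by
        rintro rfl
        rw [Polynomial.map_zero] at hH₁
        exact hh (by
          have := hH₁.symm
          rcases mul_eq_zero.mp this with h1 | h1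
          · exact absurd h1 (by simpa [C_eq_zero] using hα)
          · exact h1)
      have hG₁0 : G₁ ≠ 0 := by
        rintro rfl
        rw [Polynomial.map_zero] at hG₁
        exact hg₁0 (by
          rcases mul_eq_zero.mp hG₁.symm with h1 | h1
          · exact absurd h1 (by simpa [C_eq_zero] using hβ)
          · exact h1)
      have hS₁0 : S₁ ≠ 0 := by
        rintro rfl
        rw [Polynomial.map_zero] at hS₁
        exact hs₁0 (by
          rcases mul_eq_zero.mp hS₁.symm with h1 | h1
          · exact absurd h1 (by simpa [C_eq_zero] using hγ)
          · exact h1)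
      have key1 : H₁ * G₁ = C (α * β) * g := by
        apply dr_mapinj
        rw [Polynomial.map_mul, Polynomial.map_mul, map_C, hH₁, hG₁, map_mul, C_mul]
        linear_combination (-(C (φ α) * C (φ β))) * hg₁
      have key2 : H₁ * S₁ = C (α * γ) * s := by
        apply dr_mapinj
        rw [Polynomial.map_mul, Polynomial.map_mul, map_C, hH₁, hS₁, map_mul, C_mul]
        linear_combination (-(C (φ α) * C (φ γ))) * hs₁
      have hdegG₁ : G₁.degree = g₁.degree := by
        rw [← degree_map_eq_of_injective hinjφ G₁, hG₁, degree_C_mul hφβ]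
      have hdegS₁ : S₁.degree = s₁.degree := by
        rw [← degree_map_eq_of_injective hinjφ S₁, hS₁, degree_C_mul hφγ]
      have hdlt : s₁.degree < g₁.degree := by
        have e1 : s'.degree < g'.degree := by
          rw [hg'def, hs'def, degree_map_eq_of_injective hinjφ, degree_map_eq_of_injective hinjφ]
          exact hd
        have e1' : (h * s₁).degree < (h * g₁).degree := by rw [← hg₁, ← hs₁]; exact e1
        rw [degree_mul, degree_mul] at e1'
        exact (WithBot.add_lt_add_iff_left (by simp [degree_eq_bot, hh])).mp e1'
      have hCβS : (C β * S₁ : Polynomial R) ≠ 0 :=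
        mul_ne_zero (fun h0 => hβ (C_eq_zero.mp h0)) hS₁0
      have hdeg2 : (C β * S₁).degree < G₁.degree := by
        rw [degree_C_mul hβ, hdegS₁, hdegG₁]
        exact hdlt
      have hnG : G₁.natDegree ≤ n := by
        have e2 : g'.natDegree = h.natDegree + g₁.natDegree := by
          rw [hg₁]; exact natDegree_mul hh hg₁0
        have e3 : g'.natDegree = g.natDegree := natDegree_map_eq_of_injective hinjφ g
        have e4 : G₁.natDegree = g₁.natDegree := natDegree_eq_of_degree_eq hdegG₁
        omega
      have hev2 : ∀ᶠ k in Filter.cofinite, G₁.eval k ∣ (C β * S₁).eval k := by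
        filter_upwards [hyp, dr_eventually_ne_zero hH₁0] with k hk hk0
        obtain ⟨t, ht⟩ := hk
        have e1 := congrArg (Polynomial.eval k) key1
        have e2 := congrArg (Polynomial.eval k) key2
        simp only [eval_mul, eval_C] at e1 e2 ⊢
        refine ⟨γ * t, ?_⟩
        apply mul_left_cancel₀ hk0
        linear_combination β * e2 - (γ * t) * e1 + (α * β * γ) * ht
      exact ih G₁ (C β * S₁) hnG hCβS hdeg2 hev2

end DRingAux

theorem isDRing_iff_unit_values (R : Type*) [CommRing R] [IsDomain R] :
    IsDRing R ↔
      ∀ f : Polynomial R,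
        (∀ᶠ k in Filter.cofinite, IsUnit (f.eval k)) → f.degree ≤ 0 := by
  classical
  constructor
  · intro hD f hf
    obtain ⟨q, hq⟩ := hD 1 f (hf.mono fun k hk => by simpa using hk.dvd)
    have h1 : f.map (algebraMap R (FractionRing R)) * q = 1 := by
      rw [mul_comm, ← hq, Polynomial.map_one]
    have hu : IsUnit (f.map (algebraMap R (FractionRing R))) := IsUnit.of_mul_eq_one _ h1
    have h2 := degree_eq_zero_of_isUnit hu
    rw [degree_map_eq_of_injective (IsFractionRing.injective R (FractionRing R))] at h2
    exact h2.le
  · intro H f g hyp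
    have hInf : Infinite R := by
      by_contra hfin
      rw [not_infinite_iff_finite] at hfin
      have h1 := H X (by simp [Filter.cofinite_eq_bot])
      rw [degree_X] at h1
      exact absurd h1 (by decide)
    by_cases hg : g = 0
    · subst hg
      have hf0 : f = 0 := by
        apply eq_zero_of_infinite_isRoot
        have h1 : ∀ᶠ k in Filter.cofinite, f.eval k = 0 :=
          hyp.mono fun k hk => by simpa using hk
        rw [Filter.eventually_cofinite] at h1
        exact h1.infinite_compl.mono fun k hk => by simpa using hk
      exact ⟨0, by simp [hf0]⟩
    · set K := FractionRing R
      set φ := algebraMap R K with hφ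
      have hinjφ : Function.Injective φ := IsFractionRing.injective R K
      set g' := g.map φ with hg'def
      set f' := f.map φ with hf'def
      have hg' : g' ≠ 0 := (Polynomial.map_ne_zero_iff hinjφ).mpr hg
      have hmm : (g' * C g'.leadingCoeff⁻¹).Monic := monic_mul_leadingCoeff_inv hg'
      set q : Polynomial K := f' /ₘ (g' * C g'.leadingCoeff⁻¹) * C g'.leadingCoeff⁻¹ with hqdef
      set r : Polynomial K := f' %ₘ (g' * C g'.leadingCoeff⁻¹) with hrdef
      have hdivmod : f' = q * g' + r := by
        have h1 := modByMonic_add_div f' (g' * C g'.leadingCoeff⁻¹)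
        rw [hqdef, hrdef]
        linear_combination -h1
      suffices hr : r = 0 by
        exact ⟨q, by show f' = q * g'; rw [hdivmod, hr, add_zero]⟩
      by_contra hr
      have hdr : r.degree < g.degree := by
        have h1 := degree_modByMonic_lt f' hmm
        rw [degree_mul_leadingCoeff_inv _ hg'] at h1
        rw [← hrdef] at h1
        rwa [hg'def, degree_map_eq_of_injective hinjφ] at h1
      obtain ⟨b, Q, hb, hQ⟩ := dr_exists_denom q
      obtain ⟨c, S, hc, hS⟩ := dr_exists_denom r
      have hS0 : S ≠ 0 := by
        rintro rfl
        rw [Polynomial.map_zero] at hS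
        rcases mul_eq_zero.mp hS.symm with h1 | h1
        · exact hc (hinjφ (by rw [map_zero]; exact C_eq_zero.mp h1))
        · exact hr h1
      have key : C (b * c) * f = C c * Q * g + C b * S := by
        apply dr_mapinj
        rw [Polynomial.map_add, Polynomial.map_mul, Polynomial.map_mul, Polynomial.map_mul,
          Polynomial.map_mul, map_C, map_C, map_C, hQ, hS, map_mul, C_mul]
        linear_combination (C (φ b) * C (φ c)) * hdivmod
      have hev : ∀ᶠ k in Filter.cofinite, g.eval k ∣ (C b * S).eval k := by
        filter_upwards [hyp] with k hk
        obtain ⟨t, ht⟩ := hk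
        have e := congrArg (Polynomial.eval k) key
        simp only [eval_mul, eval_add, eval_C] at e ⊢
        exact ⟨b * c * t - c * Q.eval k, by linear_combination (b * c) * ht - e⟩
      have hCbS : (C b * S : Polynomial R) ≠ 0 :=
        mul_ne_zero (fun h0 => hb (C_eq_zero.mp h0)) hS0
      have hdeg : (C b * S).degree < g.degree := by
        rw [degree_C_mul hb]
        have h1 : S.degree = r.degree := by
          rw [← degree_map_eq_of_injective hinjφ S, hS, degree_C_mul]
          exact fun h0 => hc (hinjφ (by rw [map_zero]; exact h0))
        rw [h1]
        exact hdr
      exact dr_key H g.natDegree g (C b * S) le_rfl hCbS hdeg hev
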